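/- If (x_1,...,x_k) is a minimizer of the CVT energy E(x_1,...,x_k) = ∑_i ∫_{V_i(x)} ρ(x)‖x - x_i‖² dx over all k-tuples of points, and each Voronoi region has positive mass, then each x_i equals the mass centroid of its own Voronoi region V_i. -/

import Mathlib

open MeasureTheory

local notation "E2" => EuclideanSpace ℝ (Fin 2)



lemma cvt_vcell_compact {k : ℕ} {W : Set E2} (hW : IsCompact W) (c : Fin k → E2) (i : Fin k) :
    IsCompact {p ∈ W | ∀ j, ‖p - c i‖ ≤ ‖p - c j‖} := by
  have hset : {p ∈ W | ∀ j, ‖p - c i‖ ≤ ‖p - c j‖}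
      = W ∩ ⋂ j, {p : E2 | ‖p - c i‖ ≤ ‖p - c j‖} := by
    ext p; simp [Set.mem_iInter]
  rw [hset]
  exact hW.inter_right <| isClosed_iInter fun j =>
    isClosed_le ((continuous_id.sub continuous_const).norm)
      ((continuous_id.sub continuous_const).norm)

lemma cvt_bisector_null {a b : E2} (hab : a ≠ b) :
    volume {p : E2 | ‖p - a‖ = ‖p - b‖} = 0 := by
  have hset : {p : E2 | ‖p - a‖ = ‖p - b‖} = (AffineSubspace.perpBisector a b : Set E2) := by
    ext p
    simp [AffineSubspace.mem_perpBisector_iff_dist_eq, dist_eq_norm]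
  rw [hset]
  refine Measure.addHaar_affineSubspace _ _ fun h => hab ?_
  have h1 : a ∈ AffineSubspace.perpBisector a b := by rw [h]; trivial
  have h2 := AffineSubspace.mem_perpBisector_iff_dist_eq.mp h1
  simp only [dist_self] at h2
  exact dist_eq_zero.mp h2.symm

lemma cvt_assignment_le {k : ℕ} {W : Set E2} (hW : IsCompact W)
    (ρ : E2 → ℝ) (hρcont : Continuous ρ) (hρnn : ∀ p, 0 ≤ ρ p)
    (x y : Fin k → E2) (hy : Function.Injective y) :
    ∑ j, ∫ p in {p ∈ W | ∀ l, ‖p - y j‖ ≤ ‖p - y l‖}, ρ p * ‖p - y j‖ ^ 2 ∂volume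
      ≤ ∑ j, ∫ p in {p ∈ W | ∀ l, ‖p - x j‖ ≤ ‖p - x l‖}, ρ p * ‖p - y j‖ ^ 2 ∂volume := by
  classical
  set S : Fin k → Set E2 := fun j => {p ∈ W | ∀ l, ‖p - y j‖ ≤ ‖p - y l‖} with hS
  set T : Fin k → Set E2 := fun j => {p ∈ W | ∀ l, ‖p - x j‖ ≤ ‖p - x l‖} with hT
  set h : Fin k → E2 → ℝ := fun j p => ρ p * ‖p - y j‖ ^ 2 with hh
  have hhcont : ∀ j, Continuous (h j) := fun j =>
    hρcont.mul ((continuous_id.sub continuous_const).norm.pow 2)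
  have hhnn : ∀ j p, 0 ≤ h j p := fun j p => mul_nonneg (hρnn p) (by positivity)
  have hScpt : ∀ j, IsCompact (S j) := fun j => cvt_vcell_compact hW y j
  have hTcpt : ∀ j, IsCompact (T j) := fun j => cvt_vcell_compact hW x j
  have hSm : ∀ j, MeasurableSet (S j) := fun j => (hScpt j).isClosed.measurableSet
  have hTm : ∀ j, MeasurableSet (T j) := fun j => (hTcpt j).isClosed.measurableSet
  have hintS : ∀ j, Integrable ((S j).indicator (h j)) volume := fun j =>
    ((hhcont j).locallyIntegrable.integrableOn_isCompact (hScpt j)).integrable_indicator (hSm j)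
  have hintT : ∀ j, Integrable ((T j).indicator (h j)) volume := fun j =>
    ((hhcont j).locallyIntegrable.integrableOn_isCompact (hTcpt j)).integrable_indicator (hTm j)
  have lhs_eq : ∑ j, ∫ p in S j, h j p ∂volume
      = ∫ p, ∑ j, (S j).indicator (h j) p ∂volume := by
    rw [integral_finset_sum _ (fun j _ => hintS j)]
    exact (Finset.sum_congr rfl fun j _ => (integral_indicator (hSm j))).symm
  have rhs_eq : ∑ j, ∫ p in T j, h j p ∂volume
      = ∫ p, ∑ j, (T j).indicator (h j) p ∂volume := by
    rw [integral_finset_sum _ (fun j _ => hintT j)]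
    exact (Finset.sum_congr rfl fun j _ => (integral_indicator (hTm j))).symm
  rw [lhs_eq, rhs_eq]
  refine integral_mono_ae (integrable_finset_sum _ fun j _ => hintS j)
    (integrable_finset_sum _ fun j _ => hintT j) ?_
  have hN : volume (⋃ (j : Fin k) (l : Fin k) (_ : j ≠ l),
      {p : E2 | ‖p - y j‖ = ‖p - y l‖}) = 0 := by
    refine measure_iUnion_null fun j => measure_iUnion_null fun l => measure_iUnion_null fun hjl =>
      cvt_bisector_null fun hyy => hjl (hy hyy)
  filter_upwards [measure_eq_zero_iff_ae_notMem.mp hN] with p hp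
  have hgnn : (0:ℝ) ≤ ∑ j, (T j).indicator (h j) p :=
    Finset.sum_nonneg fun j _ => Set.indicator_nonneg (fun q _ => hhnn j q) p
  by_cases hex : ∃ j0, p ∈ S j0
  · obtain ⟨j0, hj0⟩ := hex
    have hpW : p ∈ W := hj0.1
    have huniq : ∀ j, j ≠ j0 → p ∉ S j := by
      intro j hj hmem
      apply hp
      refine Set.mem_iUnion.mpr ⟨j, Set.mem_iUnion.mpr ⟨j0, Set.mem_iUnion.mpr ⟨hj, ?_⟩⟩⟩
      exact le_antisymm (hmem.2 j0) (hj0.2 j)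
    have hf : ∑ j, (S j).indicator (h j) p = h j0 p := by
      rw [Finset.sum_eq_single j0]
      · exact Set.indicator_of_mem hj0 _
      · intro j _ hj; exact Set.indicator_of_notMem (huniq j hj) _
      · simp
    rw [hf]
    obtain ⟨j1, -, hj1⟩ := Finset.exists_min_image Finset.univ (fun j => ‖p - x j‖)
      ⟨j0, Finset.mem_univ j0⟩
    have hpT : p ∈ T j1 := ⟨hpW, fun l => hj1 l (Finset.mem_univ l)⟩
    have hstep : h j0 p ≤ h j1 p := by
      have h1 := hj0.2 j1
      have h2 : ‖p - y j0‖ ^ 2 ≤ ‖p - y j1‖ ^ 2 := pow_le_pow_left₀ (norm_nonneg _) h1 2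
      exact mul_le_mul_of_nonneg_left h2 (hρnn p)
    refine le_trans hstep ?_
    calc h j1 p = (T j1).indicator (h j1) p := (Set.indicator_of_mem hpT _).symm
      _ ≤ ∑ j, (T j).indicator (h j) p :=
        Finset.single_le_sum (fun j _ => Set.indicator_nonneg (fun q _ => hhnn j q) p)
          (Finset.mem_univ j1)
  · push_neg at hex
    have hf0 : ∑ j, (S j).indicator (h j) p = 0 :=
      Finset.sum_eq_zero fun j _ => Set.indicator_of_notMem (hex j) _
    rw [hf0]; exact hgnn



lemma cvt_quad_expand {V : Set E2} (hV : IsCompact V) (ρ : E2 → ℝ) (hρcont : Continuous ρ)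
    (c : E2) :
    ∫ p in V, ρ p * ‖p - c‖ ^ 2 ∂volume
      = (∫ p in V, ρ p * ‖p‖ ^ 2 ∂volume)
        - 2 * (inner ℝ (∫ p in V, ρ p • p ∂volume) c : ℝ)
        + (∫ p in V, ρ p ∂volume) * ‖c‖ ^ 2 := by
  have h1 : IntegrableOn (fun p : E2 => ρ p * ‖p‖ ^ 2) V volume :=
    (hρcont.mul (continuous_norm.pow 2)).locallyIntegrable.integrableOn_isCompact hV
  have h2 : IntegrableOn (fun p : E2 => 2 * (ρ p * (inner ℝ p c : ℝ))) V volume :=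
    ((continuous_const.mul (hρcont.mul (continuous_id.inner continuous_const)))).locallyIntegrable.integrableOn_isCompact hV
  have h3 : IntegrableOn (fun p : E2 => ρ p * ‖c‖ ^ 2) V volume :=
    (hρcont.mul continuous_const).locallyIntegrable.integrableOn_isCompact hV
  have hvec : IntegrableOn (fun p : E2 => ρ p • p) V volume :=
    (hρcont.smul continuous_id).locallyIntegrable.integrableOn_isCompact hV
  have hint : ∀ p : E2, ρ p * ‖p - c‖ ^ 2
      = ρ p * ‖p‖ ^ 2 - 2 * (ρ p * (inner ℝ p c : ℝ)) + ρ p * ‖c‖ ^ 2 := by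
    intro p; rw [norm_sub_sq_real]; ring
  calc ∫ p in V, ρ p * ‖p - c‖ ^ 2 ∂volume
      = ∫ p in V, (ρ p * ‖p‖ ^ 2 - 2 * (ρ p * (inner ℝ p c : ℝ)) + ρ p * ‖c‖ ^ 2) ∂volume := by
        simp_rw [hint]
    _ = (∫ p in V, ρ p * ‖p‖ ^ 2 ∂volume) - (∫ p in V, 2 * (ρ p * (inner ℝ p c : ℝ)) ∂volume)
        + ∫ p in V, ρ p * ‖c‖ ^ 2 ∂volume := by
        have h12 : IntegrableOn (fun p : E2 => ρ p * ‖p‖ ^ 2 - 2 * (ρ p * (inner ℝ p c : ℝ))) V volume := h1.sub h2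
        rw [integral_add h12 h3, integral_sub h1 h2]
    _ = (∫ p in V, ρ p * ‖p‖ ^ 2 ∂volume)
        - 2 * (inner ℝ (∫ p in V, ρ p • p ∂volume) c : ℝ)
        + (∫ p in V, ρ p ∂volume) * ‖c‖ ^ 2 := by
        rw [integral_const_mul, integral_mul_const]
        congr 2
        have hre : ∀ p : E2, ρ p * (inner ℝ p c : ℝ) = (inner ℝ c (ρ p • p) : ℝ) := by
          intro p
          rw [real_inner_smul_right, real_inner_comm]
        simp_rw [hre]
        rw [integral_inner hvec c, real_inner_comm]

lemma cvt_integral_pos {V : Set E2} (hV : IsCompact V) (ρ : E2 → ℝ)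
    (hρcont : Continuous ρ) (hρpos : ∀ p, 0 < ρ p)
    (hm : 0 < ∫ p in V, ρ p ∂volume) (a : E2) :
    0 < ∫ p in V, ρ p * ‖p - a‖ ^ 2 ∂volume := by
  have hVpos : 0 < volume V := by
    rcases eq_or_ne (volume V) 0 with h | h
    · rw [Measure.restrict_eq_zero.mpr h, integral_zero_measure] at hm
      exact absurd hm (lt_irrefl 0)
    · exact zero_lt_iff.mpr h
  have hint : IntegrableOn (fun p : E2 => ρ p * ‖p - a‖ ^ 2) V volume :=
    (hρcont.mul ((continuous_id.sub continuous_const).norm.pow 2)).locallyIntegrable.integrableOn_isCompact hV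
  rw [setIntegral_pos_iff_support_of_nonneg_ae
    (Filter.Eventually.of_forall fun p => mul_nonneg (hρpos p).le (by positivity)) hint]
  have hsupp : Function.support (fun p : E2 => ρ p * ‖p - a‖ ^ 2) ∩ V = V \ {a} := by
    ext p
    constructor
    · rintro ⟨hne, hpV⟩
      refine ⟨hpV, fun he => ?_⟩
      simp only [Set.mem_singleton_iff] at he
      exact hne (by simp [Function.mem_support, he])
    · rintro ⟨hpV, hpa⟩
      refine ⟨?_, hpV⟩
      simp only [Function.mem_support]
      intro h0
      rcases mul_eq_zero.mp h0 with h | h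
      · exact absurd h (hρpos p).ne'
      · apply hpa
        have : p - a = 0 := by
          have := pow_eq_zero_iff (n := 2) (by norm_num) |>.mp h
          exact norm_eq_zero.mp this
        simp [sub_eq_zero.mp this]
  rw [hsupp, measure_diff_null (measure_singleton a)]
  exact hVpos


/-- If a `k`-tuple of generators minimizes the CVT energy and each of its Voronoi
regions has positive mass, then every generator is the mass centroid of its own
Voronoi region. -/
theorem cvt_minimizer_is_centroidal
    (k : ℕ)
    (W : Set (EuclideanSpace ℝ (Fin 2))) (hW : IsCompact W)
    (ρ : EuclideanSpace ℝ (Fin 2) → ℝ) (hρcont : Continuous ρ) (hρpos : ∀ x, 0 < ρ x)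
    (Vor : (Fin k → EuclideanSpace ℝ (Fin 2)) → Fin k → Set (EuclideanSpace ℝ (Fin 2)))
    (hVor : ∀ c i, Vor c i = {p ∈ W | ∀ j, ‖p - c i‖ ≤ ‖p - c j‖})
    (E : (Fin k → EuclideanSpace ℝ (Fin 2)) → ℝ)
    (hE : ∀ c, E c = ∑ i, ∫ x in Vor c i, ρ x * ‖x - c i‖ ^ 2 ∂volume)
    (x : Fin k → EuclideanSpace ℝ (Fin 2))
    (hmin : ∀ y : Fin k → EuclideanSpace ℝ (Fin 2), E x ≤ E y)
    (hmass : ∀ i, 0 < ∫ p in Vor x i, ρ p ∂volume) :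
    ∀ i, x i = (∫ p in Vor x i, ρ p ∂volume)⁻¹ • (∫ p in Vor x i, ρ p • p ∂volume) := by
  classical
  have hVorCpt : ∀ (c : Fin k → E2) i, IsCompact (Vor c i) := by
    intro c i; rw [hVor]; exact cvt_vcell_compact hW c i
  -- Step 1: generators are pairwise distinct
  have hinj : Function.Injective x := by
    intro j l hjl
    by_contra hne
    obtain ⟨C, hC⟩ := isBounded_iff_forall_norm_le.mp hW.isBounded
    set R : ℝ := |C| + ‖x j‖ with hR
    have hRnn : 0 ≤ R := by positivity
    have hRb : ∀ p ∈ W, ‖p - x j‖ ≤ R := by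
      intro p hp
      calc ‖p - x j‖ ≤ ‖p‖ + ‖x j‖ := norm_sub_le _ _
        _ ≤ |C| + ‖x j‖ := by
            have h2 : ‖p‖ ≤ |C| := le_trans (hC p hp) (le_abs_self C)
            linarith
    set c : E2 := x j + (2 * R + 1) • EuclideanSpace.single (0 : Fin 2) (1 : ℝ) with hc
    have hfar : ∀ p ∈ W, ‖p - x j‖ < ‖p - c‖ := by
      intro p hp
      have h1 : ‖c - x j‖ = 2 * R + 1 := by
        rw [hc, add_sub_cancel_left, norm_smul, EuclideanSpace.norm_single]
        simp [abs_of_nonneg (by linarith : (0:ℝ) ≤ 2 * R + 1)]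
      have h2 := dist_triangle c p (x j)
      rw [dist_eq_norm, dist_eq_norm, dist_eq_norm] at h2
      have h3 : ‖p - c‖ = ‖c - p‖ := norm_sub_rev _ _
      have h4 := hRb p hp
      linarith
    set y : Fin k → E2 := Function.update x l c with hy
    have hVl : Vor y l = ∅ := by
      rw [hVor]
      refine Set.eq_empty_iff_forall_notMem.mpr fun p hp => ?_
      obtain ⟨hpW, hall⟩ := hp
      have h1 := hall j
      rw [hy] at h1
      rw [Function.update_self, Function.update_of_ne hne] at h1
      exact absurd h1 (not_le.mpr (hfar p hpW))
    have hVm : ∀ m, m ≠ l → Vor y m = Vor x m := by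
      intro m hm
      rw [hVor, hVor]
      ext p
      simp only [Set.mem_setOf_eq]
      constructor
      · rintro ⟨hpW, hall⟩
        refine ⟨hpW, fun n => ?_⟩
        by_cases hn : n = l
        · subst hn
          have h1 := hall j
          rw [hy, Function.update_of_ne hm, Function.update_of_ne hne] at h1
          rw [← hjl]
          exact h1
        · have h1 := hall n
          rw [hy, Function.update_of_ne hm, Function.update_of_ne hn] at h1
          exact h1
      · rintro ⟨hpW, hall⟩
        refine ⟨hpW, fun n => ?_⟩
        by_cases hn : n = l
        · subst hn
          rw [hy, Function.update_of_ne hm, Function.update_self]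
          have h1 := hall j
          have h2 := hfar p hpW
          linarith
        · rw [hy, Function.update_of_ne hm, Function.update_of_ne hn]
          exact hall n
    have hEy : E y = ∑ m ∈ Finset.univ.erase l,
        ∫ p in Vor x m, ρ p * ‖p - x m‖ ^ 2 ∂volume := by
      rw [hE y, ← Finset.sum_erase_add _ _ (Finset.mem_univ l)]
      have hterm : ∫ p in Vor y l, ρ p * ‖p - y l‖ ^ 2 ∂volume = 0 := by
        rw [hVl]; simp
      rw [hterm, add_zero]
      refine Finset.sum_congr rfl fun m hm => ?_
      have hml := Finset.ne_of_mem_erase hm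
      rw [hVm m hml, hy, Function.update_of_ne hml]
    have hEx : E x = (∑ m ∈ Finset.univ.erase l,
        ∫ p in Vor x m, ρ p * ‖p - x m‖ ^ 2 ∂volume)
        + ∫ p in Vor x l, ρ p * ‖p - x l‖ ^ 2 ∂volume := by
      rw [hE x, ← Finset.sum_erase_add _ _ (Finset.mem_univ l)]
    have hpos : 0 < ∫ p in Vor x l, ρ p * ‖p - x l‖ ^ 2 ∂volume :=
      cvt_integral_pos (hVorCpt x l) ρ hρcont hρpos (hmass l) (x l)
    have hchain := hmin y
    rw [hEy, hEx] at hchain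
    linarith
  -- Step 2: each generator is the centroid of its cell
  intro i
  set m : ℝ := ∫ p in Vor x i, ρ p ∂volume with hmdef
  set I : E2 := ∫ p in Vor x i, ρ p • p ∂volume with hIdef
  have hm : 0 < m := by rw [hmdef]; exact hmass i
  set cs : E2 := m⁻¹ • I with hcs
  by_contra hne
  set v : E2 := cs - x i with hvdef
  have hv : v ≠ 0 := sub_ne_zero.mpr (Ne.symm hne)
  have hmapinj : Function.Injective (fun t : ℝ => x i + t • v) := by
    intro s t hst
    simp only at hst
    have h1 : s • v = t • v := add_left_cancel hst
    have h2 : (s - t) • v = 0 := by rw [sub_smul, h1, sub_self]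
    rcases smul_eq_zero.mp h2 with h | h
    · linarith [sub_eq_zero.mp (by exact_mod_cast h)]
    · exact absurd h hv
  have hbadfin : Set.Finite ((fun t : ℝ => x i + t • v) ⁻¹' Set.range x) :=
    Set.Finite.preimage hmapinj.injOn (Set.finite_range x)
  obtain ⟨t, htmem⟩ := ((Set.Ioc_infinite (zero_lt_one (α := ℝ))).diff hbadfin).nonempty
  obtain ⟨⟨ht0, ht1⟩, htbad⟩ := htmem
  set ct : E2 := x i + t • v with hct
  have hctx : ∀ j, ct ≠ x j := fun j h => htbad ⟨j, h.symm⟩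
  set y : Fin k → E2 := Function.update x i ct with hy
  have hyinj : Function.Injective y := by
    intro a b hab
    rcases eq_or_ne a i with ha | ha <;> rcases eq_or_ne b i with hb | hb
    · rw [ha, hb]
    · subst ha
      rw [hy, Function.update_self, Function.update_of_ne hb] at hab
      exact absurd hab (hctx b)
    · subst hb
      rw [hy, Function.update_self, Function.update_of_ne ha] at hab
      exact absurd hab.symm (hctx a)
    · rw [hy, Function.update_of_ne ha, Function.update_of_ne hb] at hab
      exact hinj hab
  have h2 : E y ≤ ∑ j, ∫ p in Vor x j, ρ p * ‖p - y j‖ ^ 2 ∂volume := by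
    rw [hE y]
    have h := cvt_assignment_le hW ρ hρcont (fun p => (hρpos p).le) x y hyinj
    simp only [hVor]
    exact h
  have h3 : ∑ j, ∫ p in Vor x j, ρ p * ‖p - y j‖ ^ 2 ∂volume
      = (∑ j ∈ Finset.univ.erase i, ∫ p in Vor x j, ρ p * ‖p - x j‖ ^ 2 ∂volume)
        + ∫ p in Vor x i, ρ p * ‖p - ct‖ ^ 2 ∂volume := by
    rw [← Finset.sum_erase_add _ _ (Finset.mem_univ i)]
    congr 1
    · refine Finset.sum_congr rfl fun j hj => ?_
      rw [hy, Function.update_of_ne (Finset.ne_of_mem_erase hj)]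
    · rw [hy, Function.update_self]
  have h4 : E x = (∑ j ∈ Finset.univ.erase i, ∫ p in Vor x j, ρ p * ‖p - x j‖ ^ 2 ∂volume)
      + ∫ p in Vor x i, ρ p * ‖p - x i‖ ^ 2 ∂volume := by
    rw [hE x, ← Finset.sum_erase_add _ _ (Finset.mem_univ i)]
  have hq : ∫ p in Vor x i, ρ p * ‖p - ct‖ ^ 2 ∂volume
      < ∫ p in Vor x i, ρ p * ‖p - x i‖ ^ 2 ∂volume := by
    rw [cvt_quad_expand (hVorCpt x i) ρ hρcont ct, cvt_quad_expand (hVorCpt x i) ρ hρcont (x i)]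
    rw [← hmdef, ← hIdef]
    have hIm : I = m • cs := by
      rw [hcs, smul_smul, mul_inv_cancel₀ hm.ne', one_smul]
    have e1 : (inner ℝ I ct : ℝ) = inner ℝ I (x i) + t * inner ℝ I v := by
      rw [hct, inner_add_right, real_inner_smul_right]
    have e2 : ‖ct‖ ^ 2 = ‖x i‖ ^ 2 + 2 * (t * inner ℝ (x i) v) + t ^ 2 * ‖v‖ ^ 2 := by
      rw [hct, norm_add_sq_real, real_inner_smul_right, norm_smul, Real.norm_eq_abs,
        mul_pow, sq_abs]
    have e3 : (inner ℝ I v : ℝ) = m * inner ℝ cs v := by rw [hIm, real_inner_smul_left]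
    have hcsv : cs = x i + v := by rw [hvdef]; abel
    have e4 : (inner ℝ cs v : ℝ) = inner ℝ (x i) v + ‖v‖ ^ 2 := by
      rw [hcsv, inner_add_left, real_inner_self_eq_norm_sq]
    have hn : 0 < ‖v‖ ^ 2 := pow_pos (norm_pos_iff.mpr hv) 2
    have key : 0 < m * ‖v‖ ^ 2 * t * (2 - t) :=
      mul_pos (mul_pos (mul_pos hm hn) ht0) (by linarith)
    have total : (∫ p in Vor x i, ρ p * ‖p‖ ^ 2 ∂volume) - 2 * (inner ℝ I ct : ℝ) + m * ‖ct‖ ^ 2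
        = ((∫ p in Vor x i, ρ p * ‖p‖ ^ 2 ∂volume) - 2 * (inner ℝ I (x i) : ℝ) + m * ‖x i‖ ^ 2)
          + m * ‖v‖ ^ 2 * t * (t - 2) := by
      rw [e1, e2, e3, e4]; ring
    rw [total]
    linarith
  have hchain := hmin y
  rw [h3] at h2
  rw [h4] at hchain
  linarith
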